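/- Let (V₁,U₁,Θ₁) be a smooth solution of the viscous 1-shock profile ODE system with far-field limits (v₋,u₋,θ₋) at −∞ and (v_m,u_m,θ_m) at +∞ and with derivatives vanishing at ±∞, where s₁ and the far-field states satisfy the Rankine–Hugoniot conditions. Then for all ξ ∈ ℝ: U₁ = u_m − s₁(V₁ − v_m), Θ₁ = θ_m + (1/R)(−s₁²(V₁−v_m)² + (p_m − s₁²v_m)(V₁−v_m)), and V₁ satisfies the scalar ODE κV₁′ = H₁(V₁), where H₁(V) = s₁RV[((γ+1)/2)s₁²(V−v_m)² − (γp_m − s₁²v_m)(V−v_m)] / [(γ−1)(p_m − s₁²v_m − 2s₁²(V−v_m))]. -/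

import Mathlib

open Filter

noncomputable section

/-- The function `H₁` appearing in the scalar profile equation `κV₁' = H₁(V₁)`. -/
def H1fun (R γ s1 vm pm : ℝ) (V : ℝ) : ℝ :=
  s1 * R * V * ((γ + 1) / 2 * s1 ^ 2 * (V - vm) ^ 2 - (γ * pm - s1 ^ 2 * vm) * (V - vm)) /
    ((γ - 1) * (pm - s1 ^ 2 * vm - 2 * s1 ^ 2 * (V - vm)))

lemma eq_const_of_deriv_zero (f : ℝ → ℝ) (hf : Differentiable ℝ f)
    (h0 : ∀ x, deriv f x = 0) {c : ℝ} (hc : Tendsto f atTop (nhds c)) :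
    ∀ x, f x = c := by
  intro x
  have hconst : ∀ y, f y = f x := fun y => is_const_of_deriv_eq_zero hf h0 y x
  exact tendsto_nhds_unique tendsto_const_nhds (hc.congr hconst)

set_option maxHeartbeats 1000000 in
/-- **Reduction of the viscous 1-shock profile system (2.9)–(2.10).** Any smooth
solution of the viscous 1-shock profile ODE system with the prescribed far-field
limits and vanishing derivatives at `±∞` satisfies `U₁ = u_m - s₁(V₁ - v_m)`,
`Θ₁ = θ_m + (1/R)(-s₁²(V₁-v_m)² + (p_m - s₁²v_m)(V₁-v_m))`, and `V₁` solves the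
scalar ODE `κV₁' = H₁(V₁)`. -/
theorem profile_reduction
    (R γ κ s1 vminus uminus θminus vm um θm : ℝ)
    (hR : 0 < R) (hγ : 1 < γ) (hκ : 0 < κ) (hs1 : s1 < 0)
    (hvminus : 0 < vminus) (hvm : 0 < vm) (hθminus : 0 < θminus) (hθm : 0 < θm)
    (V1 U1 Θ1 : ℝ → ℝ)
    (hV1 : ContDiff ℝ (⊤ : ℕ∞) V1) (hU1 : ContDiff ℝ (⊤ : ℕ∞) U1)
    (hΘ1 : ContDiff ℝ (⊤ : ℕ∞) Θ1)
    (hV1pos : ∀ ξ : ℝ, 0 < V1 ξ)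
    -- the profile ODE system
    (ode1 : ∀ ξ : ℝ, -s1 * deriv V1 ξ - deriv U1 ξ = 0)
    (ode2 : ∀ ξ : ℝ, -s1 * deriv U1 ξ + deriv (fun η => R * Θ1 η / V1 η) ξ = 0)
    (ode3 : ∀ ξ : ℝ, -s1 * deriv (fun η => R / (γ - 1) * Θ1 η + U1 η ^ 2 / 2) ξ
        + deriv (fun η => R * Θ1 η / V1 η * U1 η) ξ
        = deriv (fun η => κ * deriv Θ1 η / V1 η) ξ)
    -- far-field limits, with vanishing derivatives
    (limm : Tendsto (fun ξ => (V1 ξ, U1 ξ, Θ1 ξ)) atBot (nhds (vminus, uminus, θminus)))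
    (limp : Tendsto (fun ξ => (V1 ξ, U1 ξ, Θ1 ξ)) atTop (nhds (vm, um, θm)))
    (limdm : Tendsto (fun ξ => (deriv V1 ξ, deriv U1 ξ, deriv Θ1 ξ)) atBot
      (nhds ((0 : ℝ), (0 : ℝ), (0 : ℝ))))
    (limdp : Tendsto (fun ξ => (deriv V1 ξ, deriv U1 ξ, deriv Θ1 ξ)) atTop
      (nhds ((0 : ℝ), (0 : ℝ), (0 : ℝ))))
    -- Rankine–Hugoniot conditions
    (RH1 : -s1 * (vm - vminus) - (um - uminus) = 0)
    (RH2 : -s1 * (um - uminus) + (R * θm / vm - R * θminus / vminus) = 0)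
    (RH3 : -s1 * ((R * θm / (γ - 1) + um ^ 2 / 2) - (R * θminus / (γ - 1) + uminus ^ 2 / 2))
        + (R * θm / vm * um - R * θminus / vminus * uminus) = 0)
    -- the denominator of H₁ does not vanish along the profile
    (hden : ∀ ξ : ℝ, R * θm / vm - s1 ^ 2 * vm - 2 * s1 ^ 2 * (V1 ξ - vm) ≠ 0) :
    ∀ ξ : ℝ,
      U1 ξ = um - s1 * (V1 ξ - vm) ∧
      Θ1 ξ = θm + (1 / R) * (-(s1 ^ 2) * (V1 ξ - vm) ^ 2
          + (R * θm / vm - s1 ^ 2 * vm) * (V1 ξ - vm)) ∧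
      κ * deriv V1 ξ = H1fun R γ s1 vm (R * θm / vm) (V1 ξ) := by
  have hγ' : γ - 1 ≠ 0 := by linarith
  have hV1ne : ∀ ξ, V1 ξ ≠ 0 := fun ξ => (hV1pos ξ).ne'
  have hV1d : Differentiable ℝ V1 := hV1.differentiable (by simp)
  have hU1d : Differentiable ℝ U1 := hU1.differentiable (by simp)
  have hΘ1d : Differentiable ℝ Θ1 := hΘ1.differentiable (by simp)
  have hΘ1'd : Differentiable ℝ (deriv Θ1) :=
    ((contDiff_infty_iff_deriv.mp hΘ1).2).differentiable (by simp)
  -- component limits at +∞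
  have hVp : Tendsto V1 atTop (nhds vm) := (continuous_fst.tendsto _).comp limp
  have hUp : Tendsto U1 atTop (nhds um) :=
    (continuous_fst.tendsto _).comp ((continuous_snd.tendsto _).comp limp)
  have hTp : Tendsto Θ1 atTop (nhds θm) :=
    (continuous_snd.tendsto _).comp ((continuous_snd.tendsto _).comp limp)
  have hTdp : Tendsto (deriv Θ1) atTop (nhds 0) :=
    (continuous_snd.tendsto _).comp ((continuous_snd.tendsto _).comp limdp)
  -- differentiability of building blocks
  have hpd : Differentiable ℝ (fun η => R * Θ1 η / V1 η) :=
    (hΘ1d.const_mul R).div hV1d hV1ne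
  have hEd : Differentiable ℝ (fun η => R / (γ - 1) * Θ1 η + U1 η ^ 2 / 2) :=
    (hΘ1d.const_mul _).add ((hU1d.pow 2).div_const 2)
  have hQd : Differentiable ℝ (fun η => R * Θ1 η / V1 η * U1 η) := hpd.mul hU1d
  have hWd : Differentiable ℝ (fun η => κ * deriv Θ1 η / V1 η) :=
    (hΘ1'd.const_mul κ).div hV1d hV1ne
  -- first integral 1
  have f1const : ∀ ξ, -s1 * V1 ξ - U1 ξ = -s1 * vm - um := by
    apply eq_const_of_deriv_zero _ ((hV1d.const_mul (-s1)).sub hU1d)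
    · intro ξ
      rw [deriv_sub ((hV1d ξ).const_mul (-s1)) (hU1d ξ), deriv_const_mul _ (hV1d ξ)]
      exact ode1 ξ
    · exact (hVp.const_mul (-s1)).sub hUp
  have hU : ∀ ξ, U1 ξ = um - s1 * (V1 ξ - vm) := by
    intro ξ; linear_combination -f1const ξ
  -- first integral 2
  have f2const : ∀ ξ, -s1 * U1 ξ + R * Θ1 ξ / V1 ξ = -s1 * um + R * θm / vm := by
    apply eq_const_of_deriv_zero _ ((hU1d.const_mul (-s1)).add hpd)
    · intro ξ
      rw [deriv_add ((hU1d ξ).const_mul (-s1)) (hpd ξ), deriv_const_mul _ (hU1d ξ)]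
      exact ode2 ξ
    · exact (hUp.const_mul (-s1)).add ((hTp.const_mul R).div hVp hvm.ne')
  have hΘ : ∀ ξ, Θ1 ξ = θm + (1 / R) * (-(s1 ^ 2) * (V1 ξ - vm) ^ 2
      + (R * θm / vm - s1 ^ 2 * vm) * (V1 ξ - vm)) := by
    intro ξ
    have h2 : R * Θ1 ξ / V1 ξ = R * θm / vm - s1 ^ 2 * (V1 ξ - vm) := by
      linear_combination f2const ξ + s1 * hU ξ
    have h' : R * Θ1 ξ = (R * θm / vm - s1 ^ 2 * (V1 ξ - vm)) * V1 ξ :=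
      (div_eq_iff (hV1ne ξ)).mp h2
    have h3 : R * Θ1 ξ * vm = (R * θm - s1 ^ 2 * (V1 ξ - vm) * vm) * V1 ξ := by
      field_simp [hvm.ne'] at h'
      linear_combination h'
    field_simp [hvm.ne']
    linear_combination h3
  -- first integral 3
  set c3 : ℝ := -s1 * (R / (γ - 1) * θm + um ^ 2 / 2) + R * θm / vm * um
      - κ * 0 / vm with hc3
  have f3const : ∀ ξ, -s1 * (R / (γ - 1) * Θ1 ξ + U1 ξ ^ 2 / 2)
      + R * Θ1 ξ / V1 ξ * U1 ξ - κ * deriv Θ1 ξ / V1 ξ = c3 := by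
    apply eq_const_of_deriv_zero _ (((hEd.const_mul (-s1)).add hQd).sub hWd)
    · intro ξ
      rw [deriv_sub (((hEd.const_mul (-s1)) ξ).add (hQd ξ)) (hWd ξ),
        deriv_add ((hEd ξ).const_mul (-s1)) (hQd ξ), deriv_const_mul _ (hEd ξ)]
      have := ode3 ξ
      linarith
    · exact ((((hTp.const_mul (R / (γ - 1))).add ((hUp.pow 2).div_const 2)).const_mul
        (-s1)).add (((hTp.const_mul R).div hVp hvm.ne').mul hUp)).sub
        ((hTdp.const_mul κ).div hVp hvm.ne')
  intro ξ
  refine ⟨hU ξ, hΘ ξ, ?_⟩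
  -- expression for deriv Θ1 via deriv V1
  have hVd : HasDerivAt V1 (deriv V1 ξ) ξ := (hV1d ξ).hasDerivAt
  have h1 : HasDerivAt (fun η => V1 η - vm) (deriv V1 ξ) ξ := hVd.sub_const vm
  have h2 : HasDerivAt (fun η => (V1 η - vm) ^ 2)
      ((2 : ℕ) * (V1 ξ - vm) ^ 1 * deriv V1 ξ) ξ := h1.pow 2
  have H : HasDerivAt (fun η => θm + (1 / R) * (-(s1 ^ 2) * (V1 η - vm) ^ 2
      + (R * θm / vm - s1 ^ 2 * vm) * (V1 η - vm)))
      ((1 / R) * (-(s1 ^ 2) * ((2 : ℕ) * (V1 ξ - vm) ^ 1 * deriv V1 ξ)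
        + (R * θm / vm - s1 ^ 2 * vm) * deriv V1 ξ)) ξ :=
    (((h2.const_mul (-(s1 ^ 2))).add (h1.const_mul (R * θm / vm - s1 ^ 2 * vm))).const_mul
      (1 / R)).const_add θm
  have hΘfun : Θ1 = fun η => θm + (1 / R) * (-(s1 ^ 2) * (V1 η - vm) ^ 2
      + (R * θm / vm - s1 ^ 2 * vm) * (V1 η - vm)) := funext hΘ
  have hdΘ : deriv Θ1 ξ = (1 / R) * (-(s1 ^ 2) * ((2 : ℕ) * (V1 ξ - vm) ^ 1 * deriv V1 ξ)
      + (R * θm / vm - s1 ^ 2 * vm) * deriv V1 ξ) := by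
    rw [hΘfun]; exact H.deriv
  have eR : R * deriv Θ1 ξ
      = (R * θm / vm - s1 ^ 2 * vm - 2 * s1 ^ 2 * (V1 ξ - vm)) * deriv V1 ξ := by
    rw [hdΘ]
    field_simp
    ring
  -- the key algebraic identity from the third first integral
  have h4 : κ * deriv Θ1 ξ
      = (-s1 * (R / (γ - 1) * Θ1 ξ + U1 ξ ^ 2 / 2) + R * Θ1 ξ / V1 ξ * U1 ξ - c3)
        * V1 ξ := by
    have h3 : κ * deriv Θ1 ξ / V1 ξ
        = -s1 * (R / (γ - 1) * Θ1 ξ + U1 ξ ^ 2 / 2) + R * Θ1 ξ / V1 ξ * U1 ξ - c3 := by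
      linear_combination -f3const ξ
    exact (div_eq_iff (hV1ne ξ)).mp h3
  have h5 : (γ - 1) * (κ * deriv Θ1 ξ)
      = V1 ξ * (s1 * ((γ + 1) / 2 * s1 ^ 2 * (V1 ξ - vm) ^ 2
        - (γ * (R * θm / vm) - s1 ^ 2 * vm) * (V1 ξ - vm))) := by
    rw [h4, hU ξ, hΘ ξ, hc3]
    field_simp [hγ', hvm.ne', hR.ne', hV1ne ξ]
    ring
  have hY : (γ - 1) * (R * θm / vm - s1 ^ 2 * vm - 2 * s1 ^ 2 * (V1 ξ - vm)) ≠ 0 :=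
    mul_ne_zero hγ' (hden ξ)
  show κ * deriv V1 ξ
      = s1 * R * V1 ξ * ((γ + 1) / 2 * s1 ^ 2 * (V1 ξ - vm) ^ 2
          - (γ * (R * θm / vm) - s1 ^ 2 * vm) * (V1 ξ - vm)) /
        ((γ - 1) * (R * θm / vm - s1 ^ 2 * vm - 2 * s1 ^ 2 * (V1 ξ - vm)))
  rw [eq_div_iff hY]
  linear_combination (-(κ * (γ - 1))) * eR + R * h5
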